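/- Let D be a Dedekind domain. If NE₂(D) ≠ SL₂(D), then NE₂(D,𝔮) ≠ SL₂(D,𝔮) for every nonzero ideal 𝔮 of D. -/

import Mathlib

open Matrix

/-- The translation matrix `T(r) = [[1, r], [0, 1]]` in `SL₂(R)`. -/
def Tm (R : Type*) [CommRing R] (r : R) : Matrix.SpecialLinearGroup (Fin 2) R :=
  ⟨!![1, r; 0, 1], by simp [Matrix.det_fin_two_of]⟩

/-- The principal congruence subgroup `SL₂(R, 𝔮)`, the kernel of reduction mod `𝔮`. -/
def SLmod (R : Type*) [CommRing R] (q : Ideal R) :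
    Subgroup (Matrix.SpecialLinearGroup (Fin 2) R) :=
  (Matrix.SpecialLinearGroup.map (Ideal.Quotient.mk q)).ker

/-- `H` is a congruence subgroup: it contains a principal congruence subgroup of
nonzero level. -/
def IsCongruence {R : Type*} [CommRing R]
    (H : Subgroup (Matrix.SpecialLinearGroup (Fin 2) R)) : Prop :=
  ∃ q : Ideal R, q ≠ ⊥ ∧ SLmod R q ≤ H

/-- `q` is the level `l(H)` of `H`: the largest ideal all of whose associated translations
lie in the normal core of `H` (equivalently, the largest ideal contained in the
quasi-level of `H`). -/
def IsLevel {R : Type*} [CommRing R]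
    (H : Subgroup (Matrix.SpecialLinearGroup (Fin 2) R)) (q : Ideal R) : Prop :=
  (∀ r ∈ q, Tm R r ∈ H.normalCore) ∧
    ∀ I : Ideal R, (∀ r ∈ I, Tm R r ∈ H.normalCore) → I ≤ q

/-- `NE₂(D,q)`: the normal closure in `SL₂(D)` of the translations `T(x)`, `x ∈ q`. -/
def NE2 (D : Type*) [CommRing D] (q : Ideal D) :
    Subgroup (Matrix.SpecialLinearGroup (Fin 2) D) :=
  Subgroup.normalClosure {x | ∃ r ∈ q, x = Tm D r}

/-- The lower translation matrix `L(r) = [[1, 0], [r, 1]]`. -/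
def Lm (R : Type*) [CommRing R] (r : R) : Matrix.SpecialLinearGroup (Fin 2) R :=
  ⟨!![1, 0; r, 1], by simp [Matrix.det_fin_two_of]⟩

lemma reduce {R : Type*} [CommRing R] (Y : Matrix.SpecialLinearGroup (Fin 2) R) (t u : R)
    (hu : u * ((Y : Matrix (Fin 2) (Fin 2) R) 0 0 + t * (Y : Matrix (Fin 2) (Fin 2) R) 1 0) = 1) :
    ∃ t1 s1 t2 s2 t3 : R,
      Tm R t3 * Lm R s2 * Tm R t2 * Lm R s1 * Tm R t1 * Y = 1 := by
  set A := (Y : Matrix (Fin 2) (Fin 2) R) 0 0 with hA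
  set B := (Y : Matrix (Fin 2) (Fin 2) R) 0 1 with hB
  set C := (Y : Matrix (Fin 2) (Fin 2) R) 1 0 with hC
  set Dd := (Y : Matrix (Fin 2) (Fin 2) R) 1 1 with hD
  set M := Lm R (-1) * Tm R (1 - (A + t * C)) * Lm R (u * (1 - C)) * Tm R t * Y with hM
  have hYm : (Y : Matrix (Fin 2) (Fin 2) R) = !![A, B; C, Dd] := by
    rw [Matrix.eta_fin_two (Y : Matrix (Fin 2) (Fin 2) R)]
  have h00 : (M : Matrix (Fin 2) (Fin 2) R) 0 0 = 1 := by
    simp only [hM, Matrix.SpecialLinearGroup.coe_mul]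
    simp [hM, Tm, Lm, Matrix.mul_apply, Fin.sum_univ_succ, hYm]
    linear_combination ((1 - (A + t * C)) * (1 - C)) * hu
  have h10 : (M : Matrix (Fin 2) (Fin 2) R) 1 0 = 0 := by
    simp only [hM, Matrix.SpecialLinearGroup.coe_mul]
    simp [hM, Tm, Lm, Matrix.mul_apply, Fin.sum_univ_succ, hYm]
    linear_combination ((1 - C) * (A + t * C)) * hu
  have h11 : (M : Matrix (Fin 2) (Fin 2) R) 1 1 = 1 := by
    have hd := M.2
    rw [Matrix.det_fin_two, h00, h10] at hd
    linear_combination hd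
  refine ⟨t, u * (1 - C), 1 - (A + t * C), -1, -((M : Matrix (Fin 2) (Fin 2) R) 0 1), ?_⟩
  have hfin : Tm R (-((M : Matrix (Fin 2) (Fin 2) R) 0 1)) * M = 1 := by
    ext i j
    fin_cases i <;> fin_cases j <;> simp only [Matrix.SpecialLinearGroup.coe_mul] <;>
      simp [Tm, Matrix.mul_apply, Fin.sum_univ_succ, h00, h10, h11]
  simpa only [hM, mul_assoc] using hfin

lemma Tm_mem_NE2_top {D : Type*} [CommRing D] (r : D) : Tm D r ∈ NE2 D ⊤ :=
  Subgroup.subset_normalClosure ⟨r, trivial, rfl⟩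

lemma Lm_mem_NE2_top {D : Type*} [CommRing D] (r : D) : Lm D r ∈ NE2 D ⊤ := by
  set w : Matrix.SpecialLinearGroup (Fin 2) D :=
    ⟨!![0, 1; -1, 0], by simp [Matrix.det_fin_two_of]⟩ with hwdef
  have hw : w * Tm D (-r) = Lm D r * w := by
    ext i j
    fin_cases i <;> fin_cases j <;> simp only [Matrix.SpecialLinearGroup.coe_mul] <;>
      simp [hwdef, Tm, Lm, Matrix.mul_apply, Fin.sum_univ_succ]
  have h2 : Lm D r = w * Tm D (-r) * w⁻¹ := by
    rw [hw, mul_inv_cancel_right]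
  rw [h2]
  haveI : (NE2 D ⊤).Normal := Subgroup.normalClosure_normal
  exact this.conj_mem _ (Tm_mem_NE2_top (-r)) w

lemma NE2_le_top {D : Type*} [CommRing D] (q : Ideal D) : NE2 D q ≤ NE2 D ⊤ :=
  Subgroup.normalClosure_mono (fun _x ⟨r, _, hx⟩ => ⟨r, trivial, hx⟩)

lemma map_Tm {D S : Type*} [CommRing D] [CommRing S] (f : D →+* S) (r : D) :
    Matrix.SpecialLinearGroup.map f (Tm D r) = Tm S (f r) := by
  ext i j
  fin_cases i <;> fin_cases j <;> simp only [Matrix.SpecialLinearGroup.map_apply_coe] <;> simp [Tm]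

lemma map_Lm {D S : Type*} [CommRing D] [CommRing S] (f : D →+* S) (r : D) :
    Matrix.SpecialLinearGroup.map f (Lm D r) = Lm S (f r) := by
  ext i j
  fin_cases i <;> fin_cases j <;> simp only [Matrix.SpecialLinearGroup.map_apply_coe] <;> simp [Lm]

lemma exists_unit_combo {D : Type*} [CommRing D] [IsDomain D] [IsDedekindDomain D]
    {q : Ideal D} (hq : q ≠ ⊥) {a c : D} (hco : IsCoprime a c) :
    ∃ t u : D, u * (a + t * c) - 1 ∈ q := by
  classical
  have hfin : {v : IsDedekindDomain.HeightOneSpectrum D | v.asIdeal ∣ q}.Finite :=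
    Ideal.finite_factors hq
  haveI : Finite {v : IsDedekindDomain.HeightOneSpectrum D | v.asIdeal ∣ q} := hfin.to_subtype
  set ι := {v : IsDedekindDomain.HeightOneSpectrum D | v.asIdeal ∣ q} with hι
  have hmax : ∀ v : ι, v.1.asIdeal.IsMaximal := fun v =>
    Ideal.IsPrime.isMaximal v.1.isPrime v.1.ne_bot
  have hpair : Pairwise fun (v w : ι) => IsCoprime v.1.asIdeal w.1.asIdeal := by
    intro v w hvw
    rw [Ideal.isCoprime_iff_sup_eq]
    exact (hmax v).coprime_of_ne (hmax w)
      (fun hh => hvw (Subtype.ext (IsDedekindDomain.HeightOneSpectrum.ext hh)))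
  obtain ⟨t, ht⟩ := Ideal.exists_forall_sub_mem_ideal (I := fun v : ι => v.1.asIdeal) hpair
      (fun v => if a ∈ v.1.asIdeal then 1 else 0)
  have hnot : ∀ v : ι, a + t * c ∉ v.1.asIdeal := by
    intro v hmem
    by_cases hav : a ∈ v.1.asIdeal
    · have htv : t - 1 ∈ v.1.asIdeal := by simpa [hav] using ht v
      have hcv : c ∉ v.1.asIdeal := by
        intro hcv
        obtain ⟨x, y, hxy⟩ := hco
        have h1 : (1 : D) ∈ v.1.asIdeal := by
          rw [← hxy]
          exact Ideal.add_mem _ (Ideal.mul_mem_left _ _ hav) (Ideal.mul_mem_left _ _ hcv)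
        exact v.1.isPrime.ne_top (Ideal.eq_top_of_isUnit_mem _ h1 isUnit_one)
      have h1 : t * c ∈ v.1.asIdeal := by
        have h2 := Ideal.sub_mem _ hmem hav; simpa using h2
      rcases v.1.isPrime.mem_or_mem h1 with h2 | h2
      · have h3 : (1 : D) ∈ v.1.asIdeal := by
          have h4 := Ideal.sub_mem _ h2 htv; simpa using h4
        exact v.1.isPrime.ne_top (Ideal.eq_top_of_isUnit_mem _ h3 isUnit_one)
      · exact hcv h2
    · have htv : t ∈ v.1.asIdeal := by simpa [hav] using ht v
      apply hav
      have h2 : a = (a + t * c) - t * c := by ring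
      rw [h2]
      exact Ideal.sub_mem _ hmem (Ideal.mul_mem_right _ _ htv)
  have hsup : Ideal.span {a + t * c} ⊔ q = ⊤ := by
    by_contra hne
    obtain ⟨m, hmmax, hle⟩ := Ideal.exists_le_maximal _ hne
    have hqm : q ≤ m := le_trans le_sup_right hle
    have hmbot : m ≠ ⊥ := fun hh => hq (le_bot_iff.mp (hh ▸ hqm))
    have hv : (⟨m, hmmax.isPrime, hmbot⟩ : IsDedekindDomain.HeightOneSpectrum D) ∈ ι :=
      Ideal.dvd_iff_le.mpr hqm
    exact hnot ⟨_, hv⟩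
      (hle (Ideal.mem_sup_left (Ideal.mem_span_singleton_self (a + t * c))))
  have h1 : (1 : D) ∈ Ideal.span {a + t * c} ⊔ q := hsup ▸ Submodule.mem_top
  obtain ⟨y, hy, z, hz, hyz⟩ := Submodule.mem_sup.mp h1
  obtain ⟨u, hu⟩ := Ideal.mem_span_singleton'.mp hy
  refine ⟨t, u, ?_⟩
  have heq : u * (a + t * c) - 1 = -z := by rw [hu, ← hyz]; ring
  rw [heq]
  exact neg_mem hz

lemma exists_compensator {D : Type*} [CommRing D] [IsDomain D] [IsDedekindDomain D]
    {q : Ideal D} (hq : q ≠ ⊥) (X : Matrix.SpecialLinearGroup (Fin 2) D) :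
    ∃ E, E ∈ NE2 D ⊤ ∧ E * X ∈ SLmod D q := by
  set π := Matrix.SpecialLinearGroup.map (n := Fin 2) (Ideal.Quotient.mk q) with hπ
  have hdet : (X : Matrix (Fin 2) (Fin 2) D) 0 0 * (X : Matrix (Fin 2) (Fin 2) D) 1 1 -
      (X : Matrix (Fin 2) (Fin 2) D) 0 1 * (X : Matrix (Fin 2) (Fin 2) D) 1 0 = 1 := by
    have := X.2; rwa [Matrix.det_fin_two] at this
  have hco : IsCoprime ((X : Matrix (Fin 2) (Fin 2) D) 0 0)
      ((X : Matrix (Fin 2) (Fin 2) D) 1 0) :=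
    ⟨(X : Matrix (Fin 2) (Fin 2) D) 1 1, -(X : Matrix (Fin 2) (Fin 2) D) 0 1, by
      linear_combination hdet⟩
  obtain ⟨t, u, htu⟩ := exists_unit_combo hq hco
  have hentry : ∀ i j, (π X : Matrix (Fin 2) (Fin 2) (D ⧸ q)) i j =
      Ideal.Quotient.mk q ((X : Matrix (Fin 2) (Fin 2) D) i j) := fun i j => rfl
  have hu : (Ideal.Quotient.mk q u) *
      ((π X : Matrix (Fin 2) (Fin 2) (D ⧸ q)) 0 0 +
        (Ideal.Quotient.mk q t) * (π X : Matrix (Fin 2) (Fin 2) (D ⧸ q)) 1 0) = 1 := by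
    rw [hentry, hentry]
    have h0 : Ideal.Quotient.mk q (u * ((X : Matrix (Fin 2) (Fin 2) D) 0 0 +
        t * (X : Matrix (Fin 2) (Fin 2) D) 1 0) - 1) = 0 :=
      Ideal.Quotient.eq_zero_iff_mem.mpr htu
    rw [map_sub, _root_.map_one, sub_eq_zero] at h0
    rw [← h0, _root_.map_mul, _root_.map_add, _root_.map_mul]
  obtain ⟨t1, s1, t2, s2, t3, hred⟩ := reduce (π X) _ _ hu
  obtain ⟨t1', rfl⟩ := Ideal.Quotient.mk_surjective t1
  obtain ⟨s1', rfl⟩ := Ideal.Quotient.mk_surjective s1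
  obtain ⟨t2', rfl⟩ := Ideal.Quotient.mk_surjective t2
  obtain ⟨s2', rfl⟩ := Ideal.Quotient.mk_surjective s2
  obtain ⟨t3', rfl⟩ := Ideal.Quotient.mk_surjective t3
  refine ⟨Tm D t3' * Lm D s2' * Tm D t2' * Lm D s1' * Tm D t1',
    mul_mem (mul_mem (mul_mem (mul_mem (Tm_mem_NE2_top _) (Lm_mem_NE2_top _))
      (Tm_mem_NE2_top _)) (Lm_mem_NE2_top _)) (Tm_mem_NE2_top _), ?_⟩
  rw [SLmod, MonoidHom.mem_ker]
  have : π (Tm D t3' * Lm D s2' * Tm D t2' * Lm D s1' * Tm D t1' * X) =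
      Tm _ (Ideal.Quotient.mk q t3') * Lm _ (Ideal.Quotient.mk q s2') *
      Tm _ (Ideal.Quotient.mk q t2') * Lm _ (Ideal.Quotient.mk q s1') *
      Tm _ (Ideal.Quotient.mk q t1') * π X := by
    simp only [hπ, _root_.map_mul, map_Tm, map_Lm]
  rw [this, hred]

/-- Lemma 1.11. If `NE₂(D) ≠ SL₂(D)`, then `NE₂(D,q) ≠ SL₂(D,q)` for
every nonzero ideal `q` of `D`. -/
theorem statement4 {D : Type*} [CommRing D] [IsDomain D] [IsDedekindDomain D]
    (h : NE2 D ⊤ ≠ ⊤) :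
    ∀ q : Ideal D, q ≠ ⊥ → NE2 D q ≠ SLmod D q := by
  intro q hq hcontr
  apply h
  rw [eq_top_iff]
  intro X _
  obtain ⟨E, hE, hEX⟩ := exists_compensator hq X
  rw [← hcontr] at hEX
  have h1 : E * X ∈ NE2 D ⊤ := NE2_le_top q hEX
  have h2 : X = E⁻¹ * (E * X) := by group
  rw [h2]
  exact mul_mem (inv_mem hE) h1
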